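/- Let f : ℝ^m → ℝ be smooth and ℤ^m-periodic. Then ∫_{[0,1]^m} D²f(x)[∇f(x), ∇f(x)]·e^{−f(x)} dx = (1/2)·∫_{[0,1]^m} ( |∇f(x)|⁴ − |∇f(x)|²·Δf(x) )·e^{−f(x)} dx. -/

import Mathlib

open MeasureTheory
open scoped RealInnerProductSpace

noncomputable section

abbrev E (m : ℕ) := EuclideanSpace ℝ (Fin m)

/-- The standard orthonormal basis of `ℝ^m`. -/
def eE (m : ℕ) (a : Fin m) : E m := EuclideanSpace.single a 1

/-- Second Fréchet derivative as a bilinear form. -/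
def D2E (m : ℕ) (g : E m → ℝ) (x X Y : E m) : ℝ := iteratedFDeriv ℝ 2 g x ![X, Y]

/-- The Laplacian `Δg(x) = Σ_a D²g(x)[e_a, e_a]`. -/
def lapE (m : ℕ) (g : E m → ℝ) (x : E m) : ℝ := ∑ a, D2E m g x (eE m a) (eE m a)

/-- The unit cube `[0,1]^m`. -/
def cube (m : ℕ) : Set (E m) := {x | ∀ i, x i ∈ Set.Icc (0 : ℝ) 1}

/-- The vector of `ℤ^m ⊂ ℝ^m` with integer coordinates `k`. -/
def latt (m : ℕ) (k : Fin m → ℤ) : E m := WithLp.toLp 2 (fun i => (k i : ℝ))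

namespace IntHessAux

variable {m : ℕ} {f : E m → ℝ}

lemma one_le_coe_top : (1 : WithTop ℕ∞) ≤ ((⊤ : ℕ∞) : WithTop ℕ∞) := by
  exact_mod_cast le_top

lemma top_add_one_le : ((⊤ : ℕ∞) : WithTop ℕ∞) + 1 ≤ ((⊤ : ℕ∞) : WithTop ℕ∞) := by
  norm_cast

lemma coord_eq_inner (v : E m) (a : Fin m) : v a = ⟪v, eE m a⟫ := by
  simp [eE, EuclideanSpace.inner_single_right]

lemma sum_coord_smul (v : E m) : ∑ a, v a • eE m a = v := by
  have h := (EuclideanSpace.basisFun (Fin m) ℝ).sum_repr v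
  simpa [eE, EuclideanSpace.basisFun_apply, EuclideanSpace.basisFun_repr] using h

lemma fderiv_cd (hf : ContDiff ℝ (⊤ : ℕ∞) f) : ContDiff ℝ (⊤ : ℕ∞) (fderiv ℝ f) :=
  hf.fderiv_right top_add_one_le

lemma grad_eq : gradient f = fun x =>
    (InnerProductSpace.toDual ℝ (E m)).symm (fderiv ℝ f x) := rfl

lemma grad_cd (hf : ContDiff ℝ (⊤ : ℕ∞) f) : ContDiff ℝ (⊤ : ℕ∞) (gradient f) := by
  rw [grad_eq]
  exact (InnerProductSpace.toDual ℝ (E m)).symm.toContinuousLinearEquiv.contDiff.comp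
    (fderiv_cd hf)

lemma inner_grad (x v : E m) : ⟪gradient f x, v⟫ = fderiv ℝ f x v :=
  InnerProductSpace.toDual_symm_apply

lemma fderiv_grad (hf : ContDiff ℝ (⊤ : ℕ∞) f) (x : E m) :
    fderiv ℝ (gradient f) x =
      ((InnerProductSpace.toDual ℝ (E m)).symm.toContinuousLinearEquiv :
        (E m →L[ℝ] ℝ) ≃L[ℝ] E m).toContinuousLinearMap.comp (fderiv ℝ (fderiv ℝ f) x) := by
  have : gradient f = ((InnerProductSpace.toDual ℝ (E m)).symm.toContinuousLinearEquiv :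
      (E m →L[ℝ] ℝ) ≃L[ℝ] E m) ∘ fderiv ℝ f := rfl
  rw [this, ContinuousLinearEquiv.comp_fderiv]

lemma D2_eq (hf : ContDiff ℝ (⊤ : ℕ∞) f) (x X Y : E m) :
    D2E m f x X Y = ⟪fderiv ℝ (gradient f) x X, Y⟫ := by
  rw [D2E, iteratedFDeriv_two_apply, fderiv_grad hf]
  simp only [Matrix.cons_val_zero, Matrix.cons_val_one, Matrix.head_cons,
    ContinuousLinearMap.comp_apply, ContinuousLinearEquiv.coe_coe,
    LinearIsometryEquiv.coe_toContinuousLinearEquiv]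
  rw [InnerProductSpace.toDual_symm_apply]

lemma lapE_eq (hf : ContDiff ℝ (⊤ : ℕ∞) f) (x : E m) :
    lapE m f x = ∑ a, ⟪fderiv ℝ (gradient f) x (eE m a), eE m a⟫ := by
  unfold lapE
  exact Finset.sum_congr rfl fun a _ => D2_eq hf x _ _

lemma fderiv_per (hf : ContDiff ℝ (⊤ : ℕ∞) f)
    (hper : ∀ (x : E m) (k : Fin m → ℤ), f (x + latt m k) = f x)
    (x : E m) (k : Fin m → ℤ) : fderiv ℝ f (x + latt m k) = fderiv ℝ f x := by
  have h1 : HasFDerivAt f (fderiv ℝ f (x + latt m k)) (x + latt m k) :=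
    (hf.differentiable (by simp) (x + latt m k)).hasFDerivAt
  have h2 : HasFDerivAt (fun y => f (y + latt m k))
      ((fderiv ℝ f (x + latt m k)).comp (ContinuousLinearMap.id ℝ (E m))) x :=
    h1.comp x ((hasFDerivAt_id x).add_const (latt m k))
  simp only [hper, ContinuousLinearMap.comp_id] at h2
  exact h2.fderiv.symm

lemma grad_per (hf : ContDiff ℝ (⊤ : ℕ∞) f)
    (hper : ∀ (x : E m) (k : Fin m → ℤ), f (x + latt m k) = f x)
    (x : E m) (k : Fin m → ℤ) : gradient f (x + latt m k) = gradient f x := by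
  rw [grad_eq]
  simp only [fderiv_per hf hper x k]

/-- The vector field whose divergence gives the identity. -/
def Wf (f : E m → ℝ) : E m → E m :=
  fun x => (Real.exp (-f x) * ⟪gradient f x, gradient f x⟫) • gradient f x

lemma Wf_cd (hf : ContDiff ℝ (⊤ : ℕ∞) f) : ContDiff ℝ (⊤ : ℕ∞) (Wf f) := by
  have hg := grad_cd hf
  exact ((Real.contDiff_exp.comp hf.neg).mul (hg.inner ℝ hg)).smul hg

lemma Wf_per (hf : ContDiff ℝ (⊤ : ℕ∞) f)
    (hper : ∀ (x : E m) (k : Fin m → ℤ), f (x + latt m k) = f x)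
    (x : E m) (k : Fin m → ℤ) : Wf f (x + latt m k) = Wf f x := by
  unfold Wf
  rw [hper, grad_per hf hper]

lemma hasFDerivW (hf : ContDiff ℝ (⊤ : ℕ∞) f) (x : E m) :
    HasFDerivAt (Wf f)
      ((Real.exp (-f x) * ⟪gradient f x, gradient f x⟫) • fderiv ℝ (gradient f) x
        + (Real.exp (-f x) • ((fderivInnerCLM ℝ (gradient f x, gradient f x)).comp
              ((fderiv ℝ (gradient f) x).prod (fderiv ℝ (gradient f) x)))
            + ⟪gradient f x, gradient f x⟫ • (Real.exp (-f x) • -(fderiv ℝ f x))).smulRight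
          (gradient f x)) x := by
  have hfd : HasFDerivAt f (fderiv ℝ f x) x := (hf.differentiable (by simp) x).hasFDerivAt
  have hgd : HasFDerivAt (gradient f) (fderiv ℝ (gradient f) x) x :=
    ((grad_cd hf).differentiable (by simp) x).hasFDerivAt
  have hexp : HasFDerivAt (fun y => Real.exp (-f y)) (Real.exp (-f x) • -(fderiv ℝ f x)) x :=
    hfd.neg.exp
  have hin : HasFDerivAt (fun y => ⟪gradient f y, gradient f y⟫)
      ((fderivInnerCLM ℝ (gradient f x, gradient f x)).comp
        ((fderiv ℝ (gradient f) x).prod (fderiv ℝ (gradient f) x))) x := hgd.inner ℝ hgd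
  exact (hexp.mul hin).smul hgd

lemma div_Wf (hf : ContDiff ℝ (⊤ : ℕ∞) f) (x : E m) :
    ∑ a, fderiv ℝ (Wf f) x (eE m a) a
      = Real.exp (-f x) * (2 * D2E m f x (gradient f x) (gradient f x)
          + ‖gradient f x‖ ^ 2 * lapE m f x - ‖gradient f x‖ ^ 4) := by
  set g := gradient f with hg
  set Dg := fderiv ℝ (gradient f) x with hDg
  set L : E m →L[ℝ] ℝ :=
    Real.exp (-f x) • ((fderivInnerCLM ℝ (g x, g x)).comp (Dg.prod Dg))
      + ⟪g x, g x⟫ • (Real.exp (-f x) • -(fderiv ℝ f x)) with hL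
  have hder := (hasFDerivW hf x).fderiv
  rw [hder]
  have hcoord : ∀ a : Fin m,
      (((Real.exp (-f x) * ⟪g x, g x⟫) • Dg + L.smulRight (g x)) (eE m a)) a
        = (Real.exp (-f x) * ⟪g x, g x⟫) * (Dg (eE m a)) a + L (eE m a) * (g x) a := by
    intro a
    simp [ContinuousLinearMap.add_apply, ContinuousLinearMap.smul_apply,
      ContinuousLinearMap.smulRight_apply, PiLp.add_apply, PiLp.smul_apply, smul_eq_mul]
  rw [Finset.sum_congr rfl fun a _ => hcoord a, Finset.sum_add_distrib, ← Finset.mul_sum]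
  have hlap : ∑ a, (Dg (eE m a)) a = lapE m f x := by
    rw [lapE_eq hf x]
    exact Finset.sum_congr rfl fun a _ => coord_eq_inner _ a
  have hsum2 : ∑ a, L (eE m a) * (g x) a = L (g x) := by
    calc ∑ a, L (eE m a) * (g x) a = ∑ a, L ((g x) a • eE m a) := by
          refine Finset.sum_congr rfl fun a _ => ?_
          rw [_root_.map_smul, smul_eq_mul, mul_comm]
      _ = L (∑ a, (g x) a • eE m a) := (map_sum L _ _).symm
      _ = L (g x) := by rw [sum_coord_smul]
  rw [hlap, hsum2, hL]
  have hLg : (Real.exp (-f x) • ((fderivInnerCLM ℝ (g x, g x)).comp (Dg.prod Dg))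
      + ⟪g x, g x⟫ • (Real.exp (-f x) • -(fderiv ℝ f x))) (g x)
      = Real.exp (-f x) * (⟪g x, Dg (g x)⟫ + ⟪Dg (g x), g x⟫)
        + ⟪g x, g x⟫ * (Real.exp (-f x) * (-(fderiv ℝ f x (g x)))) := by
    simp [ContinuousLinearMap.add_apply, ContinuousLinearMap.smul_apply,
      ContinuousLinearMap.comp_apply, ContinuousLinearMap.prod_apply,
      fderivInnerCLM_apply, smul_eq_mul]
  rw [hLg]
  have h1 : ⟪Dg (g x), g x⟫ = D2E m f x (g x) (g x) := (D2_eq hf x _ _).symm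
  have h2 : ⟪g x, Dg (g x)⟫ = D2E m f x (g x) (g x) := by
    rw [real_inner_comm]; exact h1
  have h3 : fderiv ℝ f x (g x) = ⟪g x, g x⟫ := (inner_grad x (g x)).symm
  have h4 : ⟪g x, g x⟫ = ‖g x‖ ^ 2 := real_inner_self_eq_norm_sq (g x)
  rw [h1, h2, h3, h4]
  ring

end IntHessAux

section DivZero

open IntHessAux

lemma cube_eq_preimage (m : ℕ) :
    cube m = (⇑((MeasurableEquiv.toLp 2 (Fin m → ℝ)).symm)) ⁻¹' (Set.Icc 0 1) := by
  ext x
  simp only [cube, Set.mem_setOf_eq, Set.mem_preimage, Set.mem_Icc, Pi.le_def,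
    MeasurableEquiv.coe_toLp_symm]
  constructor
  · intro h
    exact ⟨fun i => (h i).1, fun i => (h i).2⟩
  · intro h i
    exact ⟨h.1 i, h.2 i⟩

lemma integral_div_zero (m : ℕ) (W : E m → E m) (hW : ContDiff ℝ (⊤ : ℕ∞) W)
    (hWp : ∀ (x : E m) (k : Fin m → ℤ), W (x + latt m k) = W x) :
    ∫ x in cube m, (∑ a, fderiv ℝ W x (eE m a) a) = 0 := by
  rcases m with _ | n
  · simp
  · set ψ := (EuclideanSpace.equiv (Fin (n + 1)) ℝ) with hψ
    set W' : (Fin (n + 1) → ℝ) → (Fin (n + 1) → ℝ) := fun y => ψ (W (ψ.symm y)) with hW'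
    set F' : (Fin (n + 1) → ℝ) → (Fin (n + 1) → ℝ) →L[ℝ] (Fin (n + 1) → ℝ) := fun y =>
      ((ψ : E (n+1) →L[ℝ] (Fin (n+1) → ℝ)).comp
        ((fderiv ℝ W (ψ.symm y)).comp ((ψ.symm : (Fin (n+1) → ℝ) →L[ℝ] E (n+1))))) with hF'
    have hfd : ∀ y, HasFDerivAt W' (F' y) y := by
      intro y
      exact ((ψ : E (n+1) →L[ℝ] (Fin (n+1) → ℝ)).hasFDerivAt).comp y
        (((hW.differentiable (by simp) (ψ.symm y)).hasFDerivAt).comp y (ψ.symm.hasFDerivAt))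
    have hWc : Continuous W' :=
      ψ.continuous.comp (hW.continuous.comp ψ.symm.continuous)
    have hcont : Continuous fun y => ∑ i, F' y (Pi.single i 1) i := by
      apply continuous_finset_sum
      intro i _
      have h1 : Continuous fun y => fderiv ℝ W (ψ.symm y) :=
        (hW.continuous_fderiv (by simp)).comp ψ.symm.continuous
      have h2 : Continuous fun y => (fderiv ℝ W (ψ.symm y))
          ((ψ.symm : (Fin (n+1) → ℝ) →L[ℝ] E (n+1)) (Pi.single i 1)) :=
        h1.clm_apply continuous_const
      exact (continuous_apply i).comp
        ((ψ : E (n+1) →L[ℝ] (Fin (n+1) → ℝ)).continuous.comp h2)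
    have key := MeasureTheory.integral_divergence_of_hasFDerivAt_off_countable
      (0 : Fin (n+1) → ℝ) 1 (fun i => zero_le_one) W' F' ∅ Set.countable_empty
      hWc.continuousOn (fun x _ => hfd x) (hcont.integrableOn_Icc)
    -- boundary terms vanish by periodicity
    have hfaces : ∀ (i : Fin (n+1)) (x : Fin n → ℝ),
        W' (i.insertNth ((1 : Fin (n+1) → ℝ) i) x) =
          W' (i.insertNth ((0 : Fin (n+1) → ℝ) i) x) := by
      intro i x
      have hins : i.insertNth ((1 : Fin (n+1) → ℝ) i) x
          = i.insertNth ((0 : Fin (n+1) → ℝ) i) x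
            + (fun j => (((Pi.single i 1 : Fin (n+1) → ℤ) j : ℤ) : ℝ)) := by
        funext j
        refine Fin.succAboveCases i ?_ ?_ j
        · simp [Fin.insertNth_apply_same]
        · intro k
          simp [Fin.insertNth_apply_succAbove, Pi.single_eq_of_ne (Fin.succAbove_ne i k)]
      rw [hins, hW']
      simp only []
      congr 1
      rw [map_add]
      have hlatt : (ψ.symm : (Fin (n+1) → ℝ) → E (n+1))
          (fun j => (((Pi.single i 1 : Fin (n+1) → ℤ) j : ℤ) : ℝ))
          = latt (n+1) (Pi.single i 1) := rfl
      rw [hlatt, hWp]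
    have hzero : (∑ i : Fin (n+1),
        ((∫ x in Set.Icc ((0 : Fin (n+1) → ℝ) ∘ i.succAbove) ((1 : Fin (n+1) → ℝ) ∘ i.succAbove),
            W' (i.insertNth ((1 : Fin (n+1) → ℝ) i) x) i) -
          ∫ x in Set.Icc ((0 : Fin (n+1) → ℝ) ∘ i.succAbove) ((1 : Fin (n+1) → ℝ) ∘ i.succAbove),
            W' (i.insertNth ((0 : Fin (n+1) → ℝ) i) x) i)) = 0 := by
      refine Finset.sum_eq_zero fun i _ => ?_
      rw [sub_eq_zero]
      refine integral_congr_ae (Filter.Eventually.of_forall fun x => ?_)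
      simp only [hfaces i x]
    rw [hzero] at key
    -- transfer to the Euclidean side
    have hmp := EuclideanSpace.volume_preserving_symm_measurableEquiv_toLp (Fin (n+1))
    have hemb : MeasurableEmbedding ((MeasurableEquiv.toLp 2 (Fin (n+1) → ℝ)).symm) :=
      ((MeasurableEquiv.toLp 2 (Fin (n+1) → ℝ)).symm).measurableEmbedding
    have htrans := hmp.setIntegral_preimage_emb hemb
      (fun y => ∑ i, F' y (Pi.single i 1) i) (Set.Icc 0 1)
    have hpt : ∀ x : E (n+1),
        (∑ i, F' (((MeasurableEquiv.toLp 2 (Fin (n+1) → ℝ)).symm) x) (Pi.single i 1) i)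
          = ∑ a, fderiv ℝ W x (eE (n+1) a) a := by
      intro x
      refine Finset.sum_congr rfl fun i _ => ?_
      rfl
    rw [cube_eq_preimage]
    calc ∫ x in (⇑((MeasurableEquiv.toLp 2 (Fin (n+1) → ℝ)).symm)) ⁻¹' (Set.Icc 0 1),
          ∑ a, fderiv ℝ W x (eE (n+1) a) a
        = ∫ x in (⇑((MeasurableEquiv.toLp 2 (Fin (n+1) → ℝ)).symm)) ⁻¹' (Set.Icc 0 1),
            ∑ i, F' (((MeasurableEquiv.toLp 2 (Fin (n+1) → ℝ)).symm) x) (Pi.single i 1) i := by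
          refine integral_congr_ae (Filter.Eventually.of_forall fun x => ?_)
          exact (hpt x).symm
      _ = ∫ y in Set.Icc 0 1, ∑ i, F' y (Pi.single i 1) i := htrans
      _ = 0 := key

end DivZero

open IntHessAux

/-- integration by parts identity
`∫ ∇²f(∇f,∇f) e^{−f} = ½ ∫ (|∇f|⁴ − |∇f|² Δf) e^{−f}` over the torus. -/
theorem int_hessian_identity (m : ℕ) (f : E m → ℝ) (hf : ContDiff ℝ (⊤ : ℕ∞) f)
    (hper : ∀ (x : E m) (k : Fin m → ℤ), f (x + latt m k) = f x) :
    ∫ x in cube m, D2E m f x (gradient f x) (gradient f x) * Real.exp (-f x) =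
      (1 / 2) * ∫ x in cube m,
        (‖gradient f x‖ ^ 4 - ‖gradient f x‖ ^ 2 * lapE m f x) * Real.exp (-f x) := by
  have h0 := integral_div_zero m (Wf f) (Wf_cd hf) (Wf_per hf hper)
  set g := gradient f with hgdef
  set A : E m → ℝ := fun x => D2E m f x (g x) (g x) * Real.exp (-f x) with hA
  set B : E m → ℝ := fun x => (‖g x‖ ^ 4 - ‖g x‖ ^ 2 * lapE m f x) * Real.exp (-f x) with hB
  -- pointwise rewriting of the divergence
  have hdiv : ∀ x, (∑ a, fderiv ℝ (Wf f) x (eE m a) a) = 2 * A x - B x := by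
    intro x
    rw [div_Wf hf x, hA, hB]
    ring
  -- compactness & integrability
  have hcompact : IsCompact (cube m) := by
    rw [cube_eq_preimage]
    exact (EuclideanSpace.equiv (Fin m) ℝ).toHomeomorph.isCompact_preimage.2 isCompact_Icc
  have hmeas : MeasurableSet (cube m) := hcompact.measurableSet
  have h0' : ∫ x in cube m, (2 * A x - B x) = 0 :=
    (setIntegral_congr_fun hmeas fun x _ => hdiv x).symm.trans h0
  have hDgc : Continuous (fderiv ℝ (gradient f)) := (grad_cd hf).continuous_fderiv (by simp)
  have hgc : Continuous g := (grad_cd hf).continuous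
  have hexpc : Continuous fun x => Real.exp (-f x) :=
    Real.continuous_exp.comp hf.continuous.neg
  have hAc : Continuous A := by
    have hA' : A = fun x => ⟪fderiv ℝ (gradient f) x (g x), g x⟫ * Real.exp (-f x) := by
      funext x
      show D2E m f x (g x) (g x) * Real.exp (-f x) = _
      rw [D2_eq hf x]
    rw [hA']
    exact ((hDgc.clm_apply hgc).inner hgc).mul hexpc
  have hBc : Continuous B := by
    have hlapc : Continuous fun x => lapE m f x := by
      have : (fun x => lapE m f x)
          = fun x => ∑ a, ⟪fderiv ℝ (gradient f) x (eE m a), eE m a⟫ := by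
        funext x; exact lapE_eq hf x
      rw [this]
      exact continuous_finset_sum _ fun a _ =>
        (hDgc.clm_apply continuous_const).inner continuous_const
    exact (((hgc.norm.pow 4)).sub ((hgc.norm.pow 2).mul hlapc)).mul hexpc
  have hAi : IntegrableOn A (cube m) := hAc.continuousOn.integrableOn_compact hcompact
  have hBi : IntegrableOn B (cube m) := hBc.continuousOn.integrableOn_compact hcompact
  have hsplit : ∫ x in cube m, (2 * A x - B x)
      = 2 * (∫ x in cube m, A x) - ∫ x in cube m, B x := by
    rw [integral_sub (hAi.const_mul 2) hBi, integral_const_mul]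
  rw [hsplit] at h0'
  linarith
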